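/- Let K be a field with n! invertible, and let w be a monomial in x(1),...,x(m) having degree ≥ n in one of the variables and total degree ≥ n+1. Then [w] = Σ_{j=1}^n w_{⟨j⟩} belongs to the ideal of K[V^m]^{S_n} generated by the power sums [x(i)^k], i = 1,...,m, k = 1,...,n. -/

import Mathlib

open MvPolynomial

/-- The polarized power sum `[w] = ∑_{j=1}^n ∏_i x(i)_j^{a i}`. -/
noncomputable def polPowerSum (K : Type*) [CommRing K] (m n : ℕ) (a : Fin m → ℕ) :
    MvPolynomial (Fin m × Fin n) K :=
  ∑ j : Fin n, ∏ i : Fin m, X (i, j) ^ a i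

/-- `f` is invariant under the `S_n`-action permuting the index `j`. -/
def IsMultiSymm {K : Type*} [CommRing K] {m n : ℕ} (f : MvPolynomial (Fin m × Fin n) K) :
    Prop :=
  ∀ σ : Equiv.Perm (Fin n), rename (fun p : Fin m × Fin n => (p.1, σ p.2)) f = f

namespace LongTraceAux

variable {K : Type*} [CommRing K] {m n : ℕ}

lemma isMultiSymm_mul {f g : MvPolynomial (Fin m × Fin n) K}
    (hf : IsMultiSymm f) (hg : IsMultiSymm g) : IsMultiSymm (f * g) := fun σ => by
  rw [map_mul, hf σ, hg σ]

lemma isMultiSymm_neg_one_pow_mul {g : MvPolynomial (Fin m × Fin n) K}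
    (hg : IsMultiSymm g) (s : ℕ) : IsMultiSymm ((-1) ^ s * g) := fun σ => by
  rw [map_mul, map_pow, map_neg, map_one, hg σ]

lemma isMultiSymm_rename (i0 : Fin m) {q : MvPolynomial (Fin n) K}
    (hq : q.IsSymmetric) : IsMultiSymm (rename (fun j : Fin n => (i0, j)) q) := fun σ => by
  rw [rename_rename]
  have h : ((fun p : Fin m × Fin n => (p.1, σ p.2)) ∘ fun j : Fin n => (i0, j))
      = (fun j : Fin n => (i0, j)) ∘ (σ : Fin n → Fin n) := rfl
  rw [h, ← rename_rename, hq σ]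

lemma isMultiSymm_polPowerSum (a : Fin m → ℕ) :
    IsMultiSymm (polPowerSum K m n a) := fun σ => by
  simp only [polPowerSum, map_sum, map_prod, map_pow, rename_X]
  exact Fintype.sum_equiv σ _ _ fun j => rfl

lemma prod_X_pow_single (i0 : Fin m) (c : ℕ) (j : Fin n) :
    (∏ i : Fin m, (X (i, j) : MvPolynomial (Fin m × Fin n) K) ^ Pi.single i0 c i)
      = X (i0, j) ^ c := by
  rw [Finset.prod_eq_single i0]
  · rw [Pi.single_eq_same]
  · intro i _ hi
    rw [Pi.single_eq_of_ne hi, pow_zero]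
  · intro h
    exact absurd (Finset.mem_univ i0) h

lemma polPowerSum_single (i0 : Fin m) (c : ℕ) :
    polPowerSum K m n (Pi.single i0 c)
      = rename (fun j : Fin n => (i0, j)) (psum (Fin n) K c) := by
  simp only [polPowerSum, psum, map_sum, map_pow, rename_X, prod_X_pow_single]

/-- The submodule appearing in the main theorem. -/
noncomputable def PIdeal (K : Type*) [CommRing K] (m n : ℕ) :
    Submodule K (MvPolynomial (Fin m × Fin n) K) :=
  Submodule.span K {h : MvPolynomial (Fin m × Fin n) K |
    ∃ (g : MvPolynomial (Fin m × Fin n) K) (i : Fin m) (k : ℕ),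
      IsMultiSymm g ∧ 1 ≤ k ∧ k ≤ n ∧
      h = g * polPowerSum K m n (Pi.single i k)}

lemma mul_mem_PIdeal {f : MvPolynomial (Fin m × Fin n) K} (hf : f ∈ PIdeal K m n)
    {g : MvPolynomial (Fin m × Fin n) K} (hg : IsMultiSymm g) :
    g * f ∈ PIdeal K m n := by
  refine Submodule.span_induction (p := fun x _ => g * x ∈ PIdeal K m n)
    ?_ ?_ ?_ ?_ hf
  · rintro x ⟨g', i, k, hg', hk1, hkn, rfl⟩
    refine Submodule.subset_span ⟨g * g', i, k, isMultiSymm_mul hg hg', hk1, hkn, ?_⟩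
    ring
  · simp
  · intro x y _ _ hx hy
    rw [mul_add]; exact add_mem hx hy
  · intro c x _ hx
    rw [mul_smul_comm]; exact Submodule.smul_mem _ _ hx

lemma esymm_mem_PIdeal {K : Type*} [Field K] {m n : ℕ} (hn : IsUnit (n.factorial : K))
    (i0 : Fin m) {k : ℕ} (hk1 : 1 ≤ k) (hkn : k ≤ n) :
    rename (fun j : Fin n => (i0, j)) (esymm (Fin n) K k) ∈ PIdeal K m n := by
  have hku : IsUnit ((k : K)) :=
    isUnit_of_dvd_unit (Nat.cast_dvd_cast (Nat.dvd_factorial hk1 hkn)) hn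
  obtain ⟨u, hu⟩ := hku
  have hNewton := congrArg (rename (fun j : Fin n => (i0, j)))
    (MvPolynomial.mul_esymm_eq_sum (Fin n) K k)
  simp only [map_mul, map_sum, map_pow, map_neg, map_one, map_natCast] at hNewton
  have hsum : ((-1 : MvPolynomial (Fin m × Fin n) K)) ^ (k + 1) *
      ∑ a ∈ Finset.HasAntidiagonal.antidiagonal k with a.1 < k,
        (-1) ^ a.1 * rename (fun j : Fin n => (i0, j)) (esymm (Fin n) K a.1) *
          rename (fun j : Fin n => (i0, j)) (psum (Fin n) K a.2) ∈ PIdeal K m n := by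
    rw [Finset.mul_sum]
    refine Submodule.sum_mem _ fun a ha => ?_
    rw [Finset.mem_filter, Finset.HasAntidiagonal.mem_antidiagonal] at ha
    refine Submodule.subset_span
      ⟨(-1) ^ (k + 1) * ((-1) ^ a.1 * rename (fun j : Fin n => (i0, j)) (esymm (Fin n) K a.1)),
        i0, a.2, ?_, ?_, ?_, ?_⟩
    · exact isMultiSymm_neg_one_pow_mul
        (isMultiSymm_neg_one_pow_mul (isMultiSymm_rename i0 (esymm_isSymmetric _ _ _)) _) _
    · omega
    · omega
    · rw [polPowerSum_single]; ring
  have heq : rename (fun j : Fin n => (i0, j)) (esymm (Fin n) K k)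
      = ((u⁻¹ : Kˣ) : K) • ((-1 : MvPolynomial (Fin m × Fin n) K) ^ (k + 1) *
        ∑ a ∈ Finset.HasAntidiagonal.antidiagonal k with a.1 < k,
          (-1) ^ a.1 * rename (fun j : Fin n => (i0, j)) (esymm (Fin n) K a.1) *
            rename (fun j : Fin n => (i0, j)) (psum (Fin n) K a.2)) := by
    have hC : ((k : MvPolynomial (Fin m × Fin n) K)) *
        rename (fun j : Fin n => (i0, j)) (esymm (Fin n) K k)
        = ((k : K)) • rename (fun j : Fin n => (i0, j)) (esymm (Fin n) K k) := by
      rw [smul_eq_C_mul, map_natCast]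
    rw [← hNewton, hC, smul_smul, ← hu, Units.inv_mul, one_smul]
  rw [heq]
  exact Submodule.smul_mem _ _ hsum

lemma X_pow_card_eq (j : Fin n) :
    (X j : MvPolynomial (Fin n) K) ^ n
      = ∑ k ∈ Finset.range n,
          (-1) ^ k * esymm (Fin n) K (k + 1) * X j ^ (n - (k + 1)) := by
  have h := MvPolynomial.prod_C_add_X_eq_sum_esymm K (Fin n)
  have h0 := congrArg (Polynomial.eval (-(X j : MvPolynomial (Fin n) K))) h
  rw [Polynomial.eval_prod, Finset.prod_eq_zero (Finset.mem_univ j) (by simp),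
    Polynomial.eval_finset_sum] at h0
  simp only [Polynomial.eval_mul, Polynomial.eval_pow, Polynomial.eval_C, Polynomial.eval_X,
    Fintype.card_fin] at h0
  have hterm : ∀ k ∈ Finset.range (n + 1),
      esymm (Fin n) K k * (-X j : MvPolynomial (Fin n) K) ^ (n - k)
        = (-1) ^ n * ((-1) ^ k * esymm (Fin n) K k * X j ^ (n - k)) := by
    intro k hk
    rw [Finset.mem_range] at hk
    have hs : ((-1 : MvPolynomial (Fin n) K)) ^ (n - k) = (-1) ^ n * (-1) ^ k := by
      calc ((-1 : MvPolynomial (Fin n) K)) ^ (n - k)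
          = (-1) ^ (n - k) * ((-1) ^ 2) ^ k := by norm_num
        _ = (-1) ^ (n - k + 2 * k) := by rw [← pow_mul, ← pow_add]
        _ = (-1) ^ (n + k) := by congr 1; omega
        _ = (-1) ^ n * (-1) ^ k := pow_add _ _ _
    rw [neg_pow, hs]
    ring
  rw [Finset.sum_congr rfl hterm] at h0
  have hG : ∑ k ∈ Finset.range (n + 1),
      (-1) ^ k * esymm (Fin n) K k * (X j : MvPolynomial (Fin n) K) ^ (n - k) = 0 := by
    calc ∑ k ∈ Finset.range (n + 1),
        (-1) ^ k * esymm (Fin n) K k * (X j : MvPolynomial (Fin n) K) ^ (n - k)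
        = (-1) ^ n * ((-1) ^ n *
          ∑ k ∈ Finset.range (n + 1),
            (-1) ^ k * esymm (Fin n) K k * (X j : MvPolynomial (Fin n) K) ^ (n - k)) := by
          rw [← mul_assoc, ← pow_add, Even.neg_one_pow ⟨n, rfl⟩, one_mul]
      _ = (-1) ^ n * 0 := by rw [Finset.mul_sum, ← h0]
      _ = 0 := mul_zero _
  rw [Finset.sum_range_succ'] at hG
  simp only [esymm_zero, pow_zero, one_mul, Nat.sub_zero, mul_one] at hG
  have hneg : ∑ k ∈ Finset.range n,
      (-1) ^ (k + 1) * esymm (Fin n) K (k + 1) * (X j : MvPolynomial (Fin n) K) ^ (n - (k + 1))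
      = -∑ k ∈ Finset.range n,
          (-1) ^ k * esymm (Fin n) K (k + 1) * (X j : MvPolynomial (Fin n) K) ^ (n - (k + 1)) := by
    rw [← Finset.sum_neg_distrib]
    refine Finset.sum_congr rfl fun k _ => ?_
    rw [pow_succ]
    ring
  rw [hneg] at hG
  linear_combination hG

end LongTraceAux

open LongTraceAux in
/-- Let `K` be a field with `n!` invertible, and let `w = x(1)^{a 1} ⋯ x(m)^{a m}` be a
monomial of degree `≥ n` in one of the variables and of total degree `≥ n + 1`. Then
`[w]` belongs to the ideal `⟨P⟩` of the invariant ring `K[V^m]^{S_n}` generated by the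
power sums `P = {[x(i)^k] : 1 ≤ i ≤ m, 1 ≤ k ≤ n}` (as a subset of `K[V^m]`, this ideal
is the `K`-span of the products `g · [x(i)^k]` with `g` invariant). -/
theorem long_trace_mem_parameter_ideal
    (K : Type*) [Field K] (m n : ℕ) (hn : IsUnit (n.factorial : K))
    (a : Fin m → ℕ) (ha : ∃ i, n ≤ a i) (hdeg : n + 1 ≤ ∑ i, a i) :
    polPowerSum K m n a ∈
      Submodule.span K {h : MvPolynomial (Fin m × Fin n) K |
        ∃ (g : MvPolynomial (Fin m × Fin n) K) (i : Fin m) (k : ℕ),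
          IsMultiSymm g ∧ 1 ≤ k ∧ k ≤ n ∧
          h = g * polPowerSum K m n (Pi.single i k)} := by
  obtain ⟨i0, hi0⟩ := ha
  set a' : Fin m → ℕ := Function.update a i0 (a i0 - n) with ha'
  have hdecomp : ∀ j : Fin n,
      (∏ i : Fin m, (X (i, j) : MvPolynomial (Fin m × Fin n) K) ^ a i)
        = (∏ i : Fin m, X (i, j) ^ a' i) * X (i0, j) ^ n := by
    intro j
    rw [← prod_X_pow_single i0 n j, ← Finset.prod_mul_distrib]
    refine Finset.prod_congr rfl fun i _ => ?_
    rw [← pow_add]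
    congr 1
    by_cases h : i = i0
    · subst h
      simp [a', Nat.sub_add_cancel hi0]
    · simp [a', Function.update_of_ne h, Pi.single_eq_of_ne (M := fun _ : Fin m => ℕ) h n]
  have hV : ∀ j : Fin n, (X (i0, j) : MvPolynomial (Fin m × Fin n) K) ^ n
      = ∑ k ∈ Finset.range n,
          (-1) ^ k * rename (fun j : Fin n => (i0, j)) (esymm (Fin n) K (k + 1)) *
            X (i0, j) ^ (n - (k + 1)) := by
    intro j
    have h := congrArg (rename (fun j : Fin n => (i0, j)))
      (X_pow_card_eq (K := K) (n := n) j)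
    simpa only [map_sum, map_pow, map_mul, map_neg, map_one, rename_X] using h
  have key : polPowerSum K m n a
      = ∑ k ∈ Finset.range n,
          ((-1) ^ k * polPowerSum K m n (fun i => a' i + (Pi.single i0 (n - (k + 1)) : Fin m → ℕ) i)) *
            rename (fun j : Fin n => (i0, j)) (esymm (Fin n) K (k + 1)) := by
    unfold polPowerSum
    simp_rw [hdecomp, hV, Finset.mul_sum]
    rw [Finset.sum_comm]
    refine Finset.sum_congr rfl fun k _ => ?_
    simp_rw [pow_add, Finset.prod_mul_distrib, prod_X_pow_single, Finset.sum_mul]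
    refine Finset.sum_congr rfl fun j _ => ?_
    ring
  have main : polPowerSum K m n a ∈ PIdeal K m n := by
    rw [key]
    refine Submodule.sum_mem _ fun k hk => ?_
    rw [Finset.mem_range] at hk
    exact mul_mem_PIdeal (esymm_mem_PIdeal hn i0 (by omega) (by omega))
      (isMultiSymm_neg_one_pow_mul (isMultiSymm_polPowerSum _) _)
  exact main
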